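/- Let u₁ and u₂ be harmonic functions on ℝ³ \ B̄_R that tend to 0 at infinity. If the normal derivatives agree, ∂u₁/∂ν = ∂u₂/∂ν on ∂B_R, then u₁ = u₂ on ℝ³ \ B̄_R. -/

import Mathlib

noncomputable section

abbrev E3 := EuclideanSpace ℝ (Fin 3)

/-- The Laplacian of a real-valued function on ℝ³. -/
def lap (u : E3 → ℝ) (x : E3) : ℝ :=
  ∑ i : Fin 3,
    fderiv ℝ (fun y => fderiv ℝ u y (EuclideanSpace.single i 1)) x (EuclideanSpace.single i 1)

/-- `u` is harmonic on a set `s`. -/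
def HarmonicOn3 (u : E3 → ℝ) (s : Set E3) : Prop :=
  ContDiffOn ℝ 2 u s ∧ ∀ x ∈ s, lap u x = 0

open Filter Set

/-- second directional derivative data along coordinate direction `i` -/
def HasD2 (u : E3 → ℝ) (x : E3) (i : Fin 3) (c : ℝ) : Prop :=
  ∃ g' : ℝ → ℝ,
    (∀ᶠ t in nhds (0:ℝ),
      HasDerivAt (fun s : ℝ => u (x + s • (EuclideanSpace.single i 1 : E3))) (g' t) t) ∧
    HasDerivAt g' c 0

lemma HasD2.add {u w : E3 → ℝ} {x i} {c d : ℝ} (hu : HasD2 u x i c) (hw : HasD2 w x i d) :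
    HasD2 (fun y => u y + w y) x i (c + d) := by
  obtain ⟨g', hg1, hg2⟩ := hu
  obtain ⟨h', hh1, hh2⟩ := hw
  exact ⟨fun t => g' t + h' t,
    (hg1.and hh1).mono fun t ht => ht.1.add ht.2, hg2.add hh2⟩

lemma HasD2.smul {u : E3 → ℝ} {x i} {c : ℝ} (a : ℝ) (hu : HasD2 u x i c) :
    HasD2 (fun y => a * u y) x i (a * c) := by
  obtain ⟨g', hg1, hg2⟩ := hu
  exact ⟨fun t => a * g' t, hg1.mono fun t ht => ht.const_mul a, hg2.const_mul a⟩

lemma HasD2.sub {u w : E3 → ℝ} {x i} {c d : ℝ} (hu : HasD2 u x i c) (hw : HasD2 w x i d) :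
    HasD2 (fun y => u y - w y) x i (c - d) := by
  obtain ⟨g', hg1, hg2⟩ := hu
  obtain ⟨h', hh1, hh2⟩ := hw
  exact ⟨fun t => g' t - h' t,
    (hg1.and hh1).mono fun t ht => ht.1.sub ht.2, hg2.sub hh2⟩

/-- second derivative test: at a local max, each second directional derivative is ≤ 0 -/
lemma HasD2.nonpos_of_isLocalMax {u : E3 → ℝ} {x i} {c : ℝ}
    (h : HasD2 u x i c) (hmax : IsLocalMax u x) : c ≤ 0 := by
  obtain ⟨g', hg1, hg2⟩ := h
  set L : ℝ → E3 := fun s => x + s • (EuclideanSpace.single i 1 : E3) with hL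
  have hLc : Continuous L := by fun_prop
  have hL0 : L 0 = x := by simp [hL]
  have hgmax : IsLocalMax (u ∘ L) 0 := by
    have h1 : IsLocalMax u (L 0) := by rw [hL0]; exact hmax
    exact h1.comp_continuous hLc.continuousAt
  -- Fermat: g' 0 = 0
  obtain ⟨t0, ht0, hder⟩ := Metric.eventually_nhds_iff.mp hg1
  have hder' : ∀ t : ℝ, |t| < t0 → HasDerivAt (u ∘ L) (g' t) t := by
    intro t ht
    exact hder (by simpa [Real.dist_eq] using ht)
  have hferm : g' 0 = 0 :=
    hgmax.hasDerivAt_eq_zero (hder' 0 (by simpa using ht0))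
  by_contra hc
  push_neg at hc
  -- c > 0. Then g' t > 0 for small t > 0
  have hslope : Tendsto (slope g' 0) (nhdsWithin 0 (Ioi 0)) (nhds c) :=
    (hasDerivAt_iff_tendsto_slope.mp hg2).mono_left
      (nhdsWithin_mono _ (fun t ht => ne_of_gt ht))
  have hev : ∀ᶠ t in nhdsWithin (0:ℝ) (Ioi 0), 0 < slope g' 0 t :=
    hslope.eventually (eventually_gt_nhds hc)
  obtain ⟨t1, ht1, hpos'⟩ := Metric.mem_nhdsWithin_iff.mp hev
  have hpos : ∀ t : ℝ, dist t 0 < t1 → 0 < t → 0 < slope g' 0 t := by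
    intro t hd htp
    exact hpos' ⟨Metric.mem_ball.mpr hd, htp⟩
  -- local max radius
  obtain ⟨t2, ht2, hmax2⟩ := Metric.eventually_nhds_iff.mp hgmax
  set δ : ℝ := min t0 (min t1 t2) with hδ
  have hδpos : 0 < δ := lt_min ht0 (lt_min ht1 ht2)
  have hmem : ∀ t ∈ Icc (0:ℝ) (δ/2), |t| < t0 := by
    intro t ht
    rw [abs_of_nonneg ht.1]
    calc t ≤ δ/2 := ht.2
    _ < δ := by linarith
    _ ≤ t0 := min_le_left _ _
  have hcont : ContinuousOn (u ∘ L) (Icc 0 (δ/2)) := fun t ht =>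
    ((hder' t (hmem t ht)).continuousAt).continuousWithinAt
  have hdpos : ∀ t ∈ interior (Icc (0:ℝ) (δ/2)), 0 < deriv (u ∘ L) t := by
    intro t ht
    rw [interior_Icc] at ht
    have habs : |t| < t0 := hmem t ⟨le_of_lt ht.1, le_of_lt ht.2⟩
    rw [(hder' t habs).deriv]
    have hsl : 0 < slope g' 0 t := by
      apply hpos t ?_ ht.1
      rw [Real.dist_eq, sub_zero, abs_of_nonneg (le_of_lt ht.1)]
      calc t < δ/2 := ht.2
      _ < δ := by linarith
      _ ≤ t1 := le_trans (min_le_right _ _) (min_le_left _ _)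
    rw [slope_def_field, hferm] at hsl
    have : 0 < g' t / t := by simpa using hsl
    have := mul_pos this ht.1
    rwa [div_mul_cancel₀] at this
    exact ne_of_gt ht.1
  have hsm := strictMonoOn_of_deriv_pos (convex_Icc 0 (δ/2)) hcont hdpos
  have h1 := hsm (left_mem_Icc.mpr (by linarith)) (right_mem_Icc.mpr (by linarith)) (by linarith)
  have h2 : (u ∘ L) (δ/2) ≤ (u ∘ L) 0 := by
    apply hmax2
    rw [Real.dist_eq, sub_zero, abs_of_nonneg (by linarith : (0:ℝ) ≤ δ/2)]
    calc δ/2 < δ := by linarith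
    _ ≤ t2 := le_trans (min_le_right _ _) (min_le_right _ _)
  linarith

/-- A point with prescribed norm. -/
lemma exists_norm_eq3 (r : ℝ) (hr : 0 ≤ r) : ∃ y : E3, ‖y‖ = r :=
  ⟨EuclideanSpace.single 0 r, by rw [EuclideanSpace.norm_single]; exact abs_of_nonneg hr⟩

/-- Weak maximum principle on a closed annulus. -/
lemma weakMP (r1 r2 : ℝ) (h01 : 0 ≤ r1) (h12 : r1 < r2) (w : E3 → ℝ)
    (hw : ContinuousOn w {x : E3 | r1 ≤ ‖x‖ ∧ ‖x‖ ≤ r2})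
    (hint : ∀ x : E3, r1 < ‖x‖ → ‖x‖ < r2 → ¬ IsLocalMax w x) :
    ∃ y : E3, (‖y‖ = r1 ∨ ‖y‖ = r2) ∧
      ∀ x : E3, r1 ≤ ‖x‖ → ‖x‖ ≤ r2 → w x ≤ w y := by
  set A : Set E3 := {x : E3 | r1 ≤ ‖x‖ ∧ ‖x‖ ≤ r2} with hA
  have hclosed : IsClosed A := by
    have : A = (fun x : E3 => ‖x‖) ⁻¹' (Set.Icc r1 r2) := rfl
    rw [this]
    exact (isClosed_Icc).preimage continuous_norm
  have hbdd : Bornology.IsBounded A :=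
    (Metric.isBounded_closedBall (x := (0:E3)) (r := r2)).subset
      (fun x hx => by simpa [Metric.mem_closedBall] using hx.2)
  have hcomp : IsCompact A := Metric.isCompact_of_isClosed_isBounded hclosed hbdd
  have hne : A.Nonempty := by
    obtain ⟨y, hy⟩ := exists_norm_eq3 r1 h01
    exact ⟨y, by simp [hA, hy, le_of_lt h12]⟩
  obtain ⟨y, hyA, hymax⟩ := hcomp.exists_isMaxOn hne hw
  refine ⟨y, ?_, fun x hx1 hx2 => hymax ⟨hx1, hx2⟩⟩
  rcases eq_or_lt_of_le hyA.1 with h | h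
  · exact Or.inl h.symm
  rcases eq_or_lt_of_le hyA.2 with h' | h'
  · exact Or.inr h'
  exfalso
  apply hint y h h'
  have hopen : IsOpen {x : E3 | r1 < ‖x‖ ∧ ‖x‖ < r2} := by
    have : {x : E3 | r1 < ‖x‖ ∧ ‖x‖ < r2} = (fun x : E3 => ‖x‖) ⁻¹' (Set.Ioo r1 r2) := rfl
    rw [this]
    exact isOpen_Ioo.preimage continuous_norm
  have hmemnhds : A ∈ nhds y :=
    Filter.mem_of_superset (hopen.mem_nhds ⟨h, h'⟩)
      (fun x hx => ⟨le_of_lt hx.1, le_of_lt hx.2⟩)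
  exact Filter.eventually_iff_exists_mem.mpr ⟨A, hmemnhds, fun x hx => hymax hx⟩

/-- HasD2 for a C² function on an open set, with the Laplacian summand as constant. -/
lemma hasD2_of_contDiffOn {u : E3 → ℝ} {U : Set E3} (hU : IsOpen U)
    (hu : ContDiffOn ℝ 2 u U) {x : E3} (hx : x ∈ U) (i : Fin 3) :
    HasD2 u x i
      (fderiv ℝ (fun y => fderiv ℝ u y (EuclideanSpace.single i 1)) x
        (EuclideanSpace.single i 1)) := by
  set e : E3 := EuclideanSpace.single i 1 with he
  set L : ℝ → E3 := fun s => x + s • e with hL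
  have hLd : ∀ t : ℝ, HasDerivAt L e t := by
    intro t
    have := ((hasDerivAt_id t).smul_const e).const_add x
    simp only [one_smul] at this
    exact this
  have hL0 : L 0 = x := by simp [hL]
  have hu1 : ContDiffOn ℝ 1 (fderiv ℝ u) U :=
    hu.fderiv_of_isOpen hU (by norm_num)
  have hdiffu : ∀ z ∈ U, DifferentiableAt ℝ u z := fun z hz =>
    ((hu.differentiableOn (by norm_num)).differentiableAt (hU.mem_nhds hz))
  -- F y = fderiv u y e
  set F : E3 → ℝ := fun y => fderiv ℝ u y e with hF
  have hFdiff : DifferentiableAt ℝ (fderiv ℝ u) x :=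
    (hu1.differentiableOn (by norm_num)).differentiableAt (hU.mem_nhds hx)
  have hFd : HasFDerivAt F
      ((ContinuousLinearMap.apply ℝ ℝ e).comp (fderiv ℝ (fderiv ℝ u) x)) x :=
    (ContinuousLinearMap.apply ℝ ℝ e).hasFDerivAt.comp x hFdiff.hasFDerivAt
  refine ⟨fun t => F (L t), ?_, ?_⟩
  · have hevU : ∀ᶠ t in nhds (0:ℝ), L t ∈ U := by
      have hcL : Continuous L := by fun_prop
      have : Filter.Tendsto L (nhds 0) (nhds x) := by
        rw [← hL0]; exact hcL.continuousAt
      exact this.eventually (hU.eventually_mem hx)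
    refine hevU.mono fun t htU => ?_
    exact ((hdiffu _ htU).hasFDerivAt).comp_hasDerivAt t (hLd t)
  · have h1 : HasDerivAt (F ∘ L)
        (((ContinuousLinearMap.apply ℝ ℝ e).comp (fderiv ℝ (fderiv ℝ u) x)) e) 0 := by
      apply HasFDerivAt.comp_hasDerivAt
      · rw [hL0]; exact hFd
      · exact hLd 0
    show HasDerivAt (F ∘ L) (fderiv ℝ F x e) 0
    rw [hFd.fderiv]
    exact h1

lemma norm_line_sq (x : E3) (i : Fin 3) (t : ℝ) :
    ‖x + t • (EuclideanSpace.single i 1 : E3)‖ ^ 2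
      = ‖x‖ ^ 2 + 2 * x i * t + t ^ 2 := by
  have h := norm_add_sq_real x (t • (EuclideanSpace.single i 1 : E3))
  rw [h, real_inner_smul_right, norm_smul]
  have h1 : (inner ℝ x (EuclideanSpace.single i 1 : E3) : ℝ) = x i := by
    rw [EuclideanSpace.inner_single_right]; simp
  rw [h1, EuclideanSpace.norm_single]
  simp [mul_pow]
  ring

lemma hasD2_normsq (x : E3) (i : Fin 3) :
    HasD2 (fun y : E3 => ‖y‖ ^ 2) x i 2 := by
  refine ⟨fun t => 2 * x i + 2 * t, ?_, ?_⟩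
  · refine Filter.Eventually.of_forall fun t => ?_
    have heq : (fun s : ℝ => ‖x + s • (EuclideanSpace.single i 1 : E3)‖ ^ 2)
        = fun s : ℝ => ‖x‖ ^ 2 + 2 * x i * s + s ^ 2 := by
      funext s; exact norm_line_sq x i s
    rw [heq]
    have : HasDerivAt (fun s : ℝ => ‖x‖ ^ 2 + 2 * x i * s + s ^ 2)
        (0 + 2 * x i * 1 + 2 * t) t := by
      exact ((hasDerivAt_const t (‖x‖^2)).add
        ((hasDerivAt_id t).const_mul (2 * x i))).add
        (by simpa using (hasDerivAt_pow 2 t))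
    convert this using 1; ring
  · simpa using ((hasDerivAt_id (0:ℝ)).const_mul 2).const_add (2 * x i)

lemma hasD2_invnorm (x : E3) (hx : x ≠ 0) (i : Fin 3) :
    HasD2 (fun y : E3 => ‖y‖⁻¹) x i
      ((3 * (x i) ^ 2 - ‖x‖ ^ 2) / (‖x‖ ^ 5)) := by
  set a : ℝ := ‖x‖ ^ 2 with ha
  set b : ℝ := 2 * x i with hb
  have hxn : 0 < ‖x‖ := norm_pos_iff.mpr hx
  have hapos : 0 < a := by rw [ha]; positivity
  set q : ℝ → ℝ := fun t => a + b * t + t ^ 2 with hq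
  have hqline : ∀ t : ℝ, ‖x + t • (EuclideanSpace.single i 1 : E3)‖ ^ 2 = q t := by
    intro t
    rw [norm_line_sq]
  have hfun : (fun s : ℝ => ‖x + s • (EuclideanSpace.single i 1 : E3)‖⁻¹)
      = fun s : ℝ => (Real.sqrt (q s))⁻¹ := by
    funext s
    rw [← hqline s, Real.sqrt_sq (norm_nonneg _)]
  have hqd : ∀ t : ℝ, HasDerivAt q (b + 2 * t) t := by
    intro t
    have : HasDerivAt (fun s : ℝ => a + b * s + s ^ 2) (0 + b * 1 + 2 * t) t :=
      ((hasDerivAt_const t a).add ((hasDerivAt_id t).const_mul b)).add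
        (by simpa using (hasDerivAt_pow 2 t))
    convert this using 1; ring
  have hq0 : q 0 = a := by simp [hq]
  set g' : ℝ → ℝ := fun t => -(b + 2 * t) / (2 * q t * Real.sqrt (q t)) with hg'
  have hder : ∀ t : ℝ, 0 < q t →
      HasDerivAt (fun s : ℝ => (Real.sqrt (q s))⁻¹) (g' t) t := by
    intro t hqt
    have hsq : Real.sqrt (q t) ≠ 0 := ne_of_gt (Real.sqrt_pos.mpr hqt)
    have hcomp : HasDerivAt (fun s : ℝ => Real.sqrt (q s))
        (1 / (2 * Real.sqrt (q t)) * (b + 2 * t)) t :=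
      (Real.hasDerivAt_sqrt (ne_of_gt hqt)).comp t (hqd t)
    have hinv := hcomp.inv hsq
    refine hinv.congr_deriv (Eq.symm ?_)
    rw [hg']
    have h2 : Real.sqrt (q t) ^ 2 = q t := Real.sq_sqrt (le_of_lt hqt)
    have hQ' : q t ≠ 0 := ne_of_gt hqt
    rw [h2, div_eq_div_iff (by positivity) hQ']
    field_simp
  refine ⟨g', ?_, ?_⟩
  · have hqc : Continuous q := by fun_prop
    have hev : ∀ᶠ t in nhds (0:ℝ), 0 < q t := by
      have : Filter.Tendsto q (nhds 0) (nhds a) := by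
        rw [← hq0]; exact hqc.continuousAt
      exact this.eventually (eventually_gt_nhds hapos)
    refine hev.mono fun t hqt => ?_
    rw [hfun]
    exact hder t hqt
  · -- derivative of g' at 0
    have hsa : Real.sqrt a = ‖x‖ := by rw [ha, Real.sqrt_sq (norm_nonneg _)]
    have hnum : HasDerivAt (fun t : ℝ => -(b + 2 * t)) (-2) 0 := by
      have : HasDerivAt (fun t : ℝ => b + 2 * t) (2 * 1) 0 :=
        ((hasDerivAt_id (0:ℝ)).const_mul 2).const_add b
      exact this.neg.congr_deriv (by norm_num)
    have hden : HasDerivAt (fun t : ℝ => 2 * q t * Real.sqrt (q t))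
        ((2 * (b + 2 * 0)) * Real.sqrt (q 0)
          + (2 * q 0) * (1 / (2 * Real.sqrt (q 0)) * (b + 2 * 0))) 0 := by
      have h1 : HasDerivAt (fun t : ℝ => 2 * q t) (2 * (b + 2 * 0)) 0 :=
        (hqd 0).const_mul 2
      have h2 : HasDerivAt (fun s : ℝ => Real.sqrt (q s))
          (1 / (2 * Real.sqrt (q 0)) * (b + 2 * 0)) 0 :=
        (Real.hasDerivAt_sqrt (by rw [hq0]; exact ne_of_gt hapos)).comp 0 (hqd 0)
      exact h1.mul h2
    have hd0 : (2 * q 0 * Real.sqrt (q 0)) ≠ 0 := by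
      rw [hq0, hsa]; positivity
    have hdiv := hnum.div hden hd0
    have : HasDerivAt g' ((-2 * (2 * q 0 * Real.sqrt (q 0)) -
        (-(b + 2 * 0)) * ((2 * (b + 2 * 0)) * Real.sqrt (q 0)
          + (2 * q 0) * (1 / (2 * Real.sqrt (q 0)) * (b + 2 * 0))))
        / (2 * q 0 * Real.sqrt (q 0)) ^ 2) 0 := hdiv
    convert this using 1
    rw [hq0, hsa, ha, hb]
    have hxne : ‖x‖ ≠ 0 := ne_of_gt hxn
    field_simp
    ring

lemma sum_sq_coords (x : E3) : ∑ i : Fin 3, (x i) ^ 2 = ‖x‖ ^ 2 := by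
  have h := EuclideanSpace.norm_eq x
  rw [h, Real.sq_sqrt (by positivity)]
  congr 1
  funext i
  rw [Real.norm_eq_abs, sq_abs]

lemma sum_invnorm_c (x : E3) (hx : x ≠ 0) :
    ∑ i : Fin 3, (3 * (x i) ^ 2 - ‖x‖ ^ 2) / (‖x‖ ^ 5) = 0 := by
  rw [← Finset.sum_div]
  have : ∑ i : Fin 3, (3 * (x i) ^ 2 - ‖x‖ ^ 2) = 0 := by
    rw [Finset.sum_sub_distrib, ← Finset.mul_sum, sum_sq_coords]
    simp
    try ring
  rw [this, zero_div]

lemma key (R : ℝ) (hR : 0 < R) (v : E3 → ℝ) (U : Set E3) (hU : IsOpen U)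
    (hsub : {x : E3 | R ≤ ‖x‖} ⊆ U)
    (hvc : ContinuousOn v U)
    (hdiff : ∀ x ∈ U, DifferentiableAt ℝ v x)
    (hD2 : ∀ x ∈ U, ∃ c : Fin 3 → ℝ, (∀ i, HasD2 v x i (c i)) ∧ ∑ i, c i = 0)
    (hdecay : Filter.Tendsto v (Filter.cocompact E3) (nhds 0))
    (hneu : ∀ x : E3, ‖x‖ = R → fderiv ℝ v x x = 0) :
    ∀ x : E3, R ≤ ‖x‖ → v x ≤ 0 := by
  -- maximum on the sphere
  have hScomp : IsCompact {x : E3 | ‖x‖ = R} := by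
    apply Metric.isCompact_of_isClosed_isBounded
    · exact isClosed_eq continuous_norm continuous_const
    · apply (Metric.isBounded_closedBall (x := (0:E3)) (r := R)).subset
      intro y hy
      simp only [Set.mem_setOf_eq] at hy
      simp [Metric.mem_closedBall, dist_zero_right, hy]
  have hSne : Set.Nonempty {x : E3 | ‖x‖ = R} := exists_norm_eq3 R (le_of_lt hR)
  have hScont : ContinuousOn v {x : E3 | ‖x‖ = R} :=
    hvc.mono (fun y hy => hsub (le_of_eq hy.symm))
  obtain ⟨x0, hx0S, hx0max⟩ := hScomp.exists_isMaxOn hSne hScont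
  set M : ℝ := v x0 with hM
  set Mp : ℝ := max M 0 with hMp
  have hMpnn : 0 ≤ Mp := le_max_right _ _
  -- Step B : comparison with fundamental solution
  have hB : ∀ x : E3, R ≤ ‖x‖ → v x ≤ Mp * R / ‖x‖ := by
    intro x hx
    have hxn : 0 < ‖x‖ := lt_of_lt_of_le hR hx
    apply le_of_forall_pos_le_add
    intro δ hδ
    -- decay radius
    have hev : ∀ᶠ y in Filter.cocompact E3, |v y| < δ / 2 := by
      have : Metric.ball (0:ℝ) (δ/2) ∈ nhds (0:ℝ) :=
        Metric.ball_mem_nhds _ (by linarith)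
      refine (hdecay.eventually (Filter.eventually_mem_set.mpr this)).mono ?_
      intro y hy
      simpa [Real.dist_eq] using hy
    obtain ⟨K, hKcomp, hKsub⟩ := Filter.mem_cocompact.mp hev
    obtain ⟨C, hC⟩ := hKcomp.isBounded.subset_closedBall 0
    set ρ : ℝ := max (max (C + 1) (‖x‖ + 1)) (R + 1) with hρ
    have hρR : R < ρ := lt_of_lt_of_le (by linarith) (le_max_right _ _)
    have hρx : ‖x‖ ≤ ρ := le_trans (by linarith)
      (le_trans (le_max_right _ _) (le_max_left _ _))
    have hρC : C < ρ := lt_of_lt_of_le (by linarith)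
      (le_trans (le_max_left _ _) (le_max_left _ _))
    have hρpos : 0 < ρ := lt_trans hR hρR
    set ε : ℝ := δ / (2 * ρ ^ 2) with hε
    have hεpos : 0 < ε := by positivity
    have hερ : ε * ρ ^ 2 = δ / 2 := by
      rw [hε]; field_simp
    -- the comparison function
    set w : E3 → ℝ := fun y => v y - (Mp * R) * ‖y‖⁻¹ + ε * ‖y‖ ^ 2 with hw
    have hAU : {y : E3 | R ≤ ‖y‖ ∧ ‖y‖ ≤ ρ} ⊆ U := fun y hy => hsub hy.1
    have hwc : ContinuousOn w {y : E3 | R ≤ ‖y‖ ∧ ‖y‖ ≤ ρ} := by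
      apply ContinuousOn.add
      · apply ContinuousOn.sub (hvc.mono hAU)
        apply ContinuousOn.mul continuousOn_const
        apply ContinuousOn.inv₀ continuous_norm.continuousOn
        intro y hy
        exact ne_of_gt (lt_of_lt_of_le hR hy.1)
      · exact continuousOn_const.mul (continuous_norm.pow 2).continuousOn
    have hint : ∀ y : E3, R < ‖y‖ → ‖y‖ < ρ → ¬ IsLocalMax w y := by
      intro y hy1 hy2 hmax
      have hyU : y ∈ U := hsub (le_of_lt hy1)
      have hyne : y ≠ 0 := by
        intro h; rw [h] at hy1; simp at hy1; linarith
      obtain ⟨c, hc, hcsum⟩ := hD2 y hyU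
      have hall : ∀ i : Fin 3,
          HasD2 w y i (c i - (Mp * R) * ((3 * (y i) ^ 2 - ‖y‖ ^ 2) / (‖y‖ ^ 5)) + ε * 2) := by
        intro i
        exact ((hc i).sub ((hasD2_invnorm y hyne i).smul (Mp * R))).add
          ((hasD2_normsq y i).smul ε)
      have hsum : ∑ i : Fin 3,
          (c i - (Mp * R) * ((3 * (y i) ^ 2 - ‖y‖ ^ 2) / (‖y‖ ^ 5)) + ε * 2) = 6 * ε := by
        rw [Finset.sum_add_distrib, Finset.sum_sub_distrib, hcsum, ← Finset.mul_sum,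
          sum_invnorm_c y hyne]
        simp
        ring
      have hle : ∀ i : Fin 3,
          (c i - (Mp * R) * ((3 * (y i) ^ 2 - ‖y‖ ^ 2) / (‖y‖ ^ 5)) + ε * 2) ≤ 0 :=
        fun i => (hall i).nonpos_of_isLocalMax hmax
      have : (6:ℝ) * ε ≤ 0 := by
        rw [← hsum]
        exact Finset.sum_nonpos (fun i _ => hle i)
      linarith
    obtain ⟨y, hy, hymax⟩ := weakMP R ρ (le_of_lt hR) hρR w hwc hint
    have hwx : w x ≤ w y := hymax x hx hρx
    have hwy : w y ≤ δ := by
      rcases hy with h | h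
      · -- inner sphere
        have h1 : v y ≤ M := hx0max h
        have : w y = v y - Mp + ε * R ^ 2 := by
          rw [hw]
          simp only
          rw [h]
          rw [mul_assoc, mul_inv_cancel₀ (ne_of_gt hR)]
          ring
        rw [this]
        have hM1 : M ≤ Mp := le_max_left _ _
        have hεR : ε * R ^ 2 ≤ δ / 2 := by
          rw [← hερ]
          apply mul_le_mul_of_nonneg_left _ (le_of_lt hεpos)
          apply pow_le_pow_left₀ (le_of_lt hR) (le_of_lt hρR)
        linarith
      · -- outer sphere
        have hyK : y ∉ K := by
          intro hyK
          have := hC hyK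
          rw [Metric.mem_closedBall, dist_zero_right, h] at this
          linarith
        have h1 : |v y| < δ / 2 := hKsub hyK
        have h2 : v y ≤ δ / 2 := le_of_lt (lt_of_le_of_lt (le_abs_self _) h1)
        have h3 : w y = v y - (Mp * R) * ρ⁻¹ + ε * ρ ^ 2 := by rw [hw]; simp only; rw [h]
        rw [h3, hερ]
        have h4 : 0 ≤ (Mp * R) * ρ⁻¹ := by positivity
        linarith
    -- unfold w x
    have h5 : 0 ≤ ε * ‖x‖ ^ 2 := by positivity
    have h6 : w x ≤ δ := le_trans hwx hwy
    have h7 : v x = w x + (Mp * R) * ‖x‖⁻¹ - ε * ‖x‖ ^ 2 := by rw [hw]; ring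
    rw [div_eq_mul_inv]
    clear_value w ε ρ Mp M
    linarith [h5, h6, h7]
  -- Step C : conclude
  rcases le_or_gt M 0 with hM0 | hM0
  · intro x hx
    have := hB x hx
    rw [hMp, max_eq_right hM0] at this
    simpa using this
  · -- derive a contradiction from the Neumann condition
    exfalso
    have hMp' : Mp = M := max_eq_left (le_of_lt hM0)
    have hx0R : ‖x0‖ = R := hx0S
    have hx0U : x0 ∈ U := hsub (le_of_eq hx0R.symm)
    set u0 : E3 := R⁻¹ • x0 with hu0
    set g : ℝ → ℝ := fun t => v (x0 + t • u0) - (M * R) / (R + t) with hg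
    have hpt : ∀ t : ℝ, 0 ≤ t → ‖x0 + t • u0‖ = R + t := by
      intro t ht
      have : x0 + t • u0 = (1 + t / R) • x0 := by
        rw [hu0, add_smul, one_smul, smul_smul]
        rw [div_eq_mul_inv]
      rw [this, norm_smul, hx0R, Real.norm_eq_abs]
      rw [abs_of_nonneg (by positivity)]
      field_simp
    have hg0 : g 0 = 0 := by
      rw [hg]
      simp [mul_div_assoc, div_self (ne_of_gt hR), ← hM]
    have hgle : ∀ t : ℝ, 0 < t → g t ≤ 0 := by
      intro t ht
      have h1 : R ≤ ‖x0 + t • u0‖ := by rw [hpt t (le_of_lt ht)]; linarith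
      have h2 := hB _ h1
      rw [hpt t (le_of_lt ht), hMp'] at h2
      rw [hg]
      simp only
      linarith
    -- derivative of g at 0 is M / R > 0
    have hder : HasDerivAt g (M / R) 0 := by
      have hL : HasDerivAt (fun t : ℝ => x0 + t • u0) u0 0 := by
        simpa using ((hasDerivAt_id (0:ℝ)).smul_const u0).const_add x0
      have h1 : HasDerivAt (fun t : ℝ => v (x0 + t • u0)) (fderiv ℝ v x0 u0) 0 := by
        have hd := (hdiff x0 hx0U).hasFDerivAt
        have hd' : HasFDerivAt v (fderiv ℝ v x0) ((fun t : ℝ => x0 + t • u0) 0) := by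
          simpa using hd
        have := hd'.comp_hasDerivAt 0 hL
        exact this
      have h1' : fderiv ℝ v x0 u0 = 0 := by
        rw [hu0, map_smul, hneu x0 hx0R]
        simp
      have h2 : HasDerivAt (fun t : ℝ => (M * R) / (R + t)) (-(M / R)) 0 := by
        have hplus : HasDerivAt (fun t : ℝ => R + t) 1 0 :=
          (hasDerivAt_id (0:ℝ)).const_add R
        have hne : R + (0:ℝ) ≠ 0 := by simpa using ne_of_gt hR
        have hinv := hplus.inv hne
        have := hinv.const_mul (M * R)
        have heq : (fun t : ℝ => (M * R) * (R + t)⁻¹) = fun t : ℝ => (M * R) / (R + t) := by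
          funext t; rw [div_eq_mul_inv]
        simp only [Pi.inv_apply] at this
        rw [heq] at this
        refine this.congr_deriv ?_
        field_simp
        ring
      have := h1.sub h2
      rw [h1'] at this
      exact this.congr_deriv (by ring)
    -- slope argument
    have hslope : Filter.Tendsto (slope g 0) (nhdsWithin 0 (Set.Ioi 0)) (nhds (M / R)) :=
      (hasDerivAt_iff_tendsto_slope.mp hder).mono_left
        (nhdsWithin_mono _ (fun t ht => ne_of_gt ht))
    have hslope_le : ∀ᶠ t in nhdsWithin (0:ℝ) (Set.Ioi 0), slope g 0 t ≤ 0 := by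
      refine eventually_nhdsWithin_of_forall (fun t ht => ?_)
      rw [slope_def_field, hg0]
      have := hgle t ht
      have ht' : (0:ℝ) < t := ht
      rw [sub_zero, sub_zero]
      exact div_nonpos_of_nonpos_of_nonneg this (le_of_lt ht')
    have : M / R ≤ 0 :=
      le_of_tendsto hslope hslope_le
    have : 0 < M / R := div_pos hM0 hR
    linarith

lemma key_applied (R : ℝ) (hR : 0 < R) (u1 u2 : E3 → ℝ) (U : Set E3)
    (hU : IsOpen U) (hsub : {x : E3 | R ≤ ‖x‖} ⊆ U)
    (h1 : HarmonicOn3 u1 U) (h2 : HarmonicOn3 u2 U)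
    (hdecay1 : Filter.Tendsto u1 (Filter.cocompact E3) (nhds 0))
    (hdecay2 : Filter.Tendsto u2 (Filter.cocompact E3) (nhds 0))
    (hneu : ∀ x : E3, ‖x‖ = R →
      (inner ℝ (gradient u1 x) x : ℝ) = (inner ℝ (gradient u2 x) x : ℝ)) :
    ∀ x : E3, R ≤ ‖x‖ → u1 x - u2 x ≤ 0 := by
  set v : E3 → ℝ := fun y => u1 y - u2 y with hv
  have hd1 : ∀ x ∈ U, DifferentiableAt ℝ u1 x := fun x hx =>
    (h1.1.differentiableOn (by norm_num)).differentiableAt (hU.mem_nhds hx)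
  have hd2 : ∀ x ∈ U, DifferentiableAt ℝ u2 x := fun x hx =>
    (h2.1.differentiableOn (by norm_num)).differentiableAt (hU.mem_nhds hx)
  have hfg : ∀ (u : E3 → ℝ) (x : E3), DifferentiableAt ℝ u x →
      fderiv ℝ u x x = (inner ℝ (gradient u x) x : ℝ) := by
    intro u x hdx
    have hg := hdx.hasGradientAt
    have hf : HasFDerivAt u ((InnerProductSpace.toDual ℝ E3) (gradient u x)) x :=
      hasGradientAt_iff_hasFDerivAt.mp hg
    rw [hf.fderiv]
    rfl
  apply key R hR v U hU hsub
  · exact (h1.1.continuousOn).sub (h2.1.continuousOn)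
  · exact fun x hx => (hd1 x hx).sub (hd2 x hx)
  · intro x hx
    refine ⟨fun i => fderiv ℝ (fun y => fderiv ℝ u1 y (EuclideanSpace.single i 1)) x
        (EuclideanSpace.single i 1)
      - fderiv ℝ (fun y => fderiv ℝ u2 y (EuclideanSpace.single i 1)) x
        (EuclideanSpace.single i 1), ?_, ?_⟩
    · intro i
      exact (hasD2_of_contDiffOn hU h1.1 hx i).sub (hasD2_of_contDiffOn hU h2.1 hx i)
    · rw [Finset.sum_sub_distrib]
      have e1 : ∑ i : Fin 3, fderiv ℝ (fun y => fderiv ℝ u1 y (EuclideanSpace.single i 1)) x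
          (EuclideanSpace.single i 1) = lap u1 x := rfl
      have e2 : ∑ i : Fin 3, fderiv ℝ (fun y => fderiv ℝ u2 y (EuclideanSpace.single i 1)) x
          (EuclideanSpace.single i 1) = lap u2 x := rfl
      rw [e1, e2, h1.2 x hx, h2.2 x hx, sub_zero]
  · simpa using hdecay1.sub hdecay2
  · intro x hxR
    have hxU : x ∈ U := hsub (le_of_eq hxR.symm)
    have : fderiv ℝ v x = fderiv ℝ u1 x - fderiv ℝ u2 x := by
      rw [hv]
      exact fderiv_sub (hd1 x hxU) (hd2 x hxU)
    rw [this, ContinuousLinearMap.sub_apply,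
      hfg u1 x (hd1 x hxU), hfg u2 x (hd2 x hxU), hneu x hxR, sub_self]

/-- Exterior uniqueness for the Neumann problem: two harmonic functions on the exterior of
the ball `B_R` (smooth up to the boundary), decaying at infinity, whose normal derivatives
agree on `∂B_R`, coincide on `ℝ³ \ B̄_R`. -/
theorem stmt2 (R : ℝ) (hR : 0 < R) (u1 u2 : E3 → ℝ) (U : Set E3)
    (hU : IsOpen U) (hsub : {x : E3 | R ≤ ‖x‖} ⊆ U)
    (h1 : HarmonicOn3 u1 U) (h2 : HarmonicOn3 u2 U)
    (hdecay1 : Filter.Tendsto u1 (Filter.cocompact E3) (nhds 0))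
    (hdecay2 : Filter.Tendsto u2 (Filter.cocompact E3) (nhds 0))
    (hneu : ∀ x : E3, ‖x‖ = R →
      (inner ℝ (gradient u1 x) x : ℝ) = (inner ℝ (gradient u2 x) x : ℝ)) :
    ∀ x : E3, R < ‖x‖ → u1 x = u2 x := by
  intro x hx
  have hle1 := key_applied R hR u1 u2 U hU hsub h1 h2 hdecay1 hdecay2 hneu x (le_of_lt hx)
  have hle2 := key_applied R hR u2 u1 U hU hsub h2 h1 hdecay2 hdecay1
    (fun y hy => (hneu y hy).symm) x (le_of_lt hx)
  linarith
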